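/- Let P, Q, R, S : ℝ → ℝ be differentiable functions satisfying S′(φ)·P′(φ) = Q′(φ)·R′(φ) for all φ. For the ruled surface σ(x, φ) = (x, P(φ) + Q(φ)·x, R(φ) + S(φ)·x) in ℝ³, define the normal vector N(x, φ) as the cross product of the two tangent vectors ∂σ/∂x = (1, Q(φ), S(φ)) and ∂σ/∂φ = (0, P′(φ) + Q′(φ)·x, R′(φ) + S′(φ)·x). Then the normal direction is constant along each ruling: for all x₁, x₂, φ, the cross product N(x₁, φ) × N(x₂, φ) = 0. -/

import Mathlib

open scoped Matrix

/-- The normal vector of Euler's ruled surface `σ(x, φ) = (x, P φ + Q φ * x, R φ + S φ * x)`: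
the cross product of the tangent vectors `∂σ/∂x` and `∂σ/∂φ`. -/
noncomputable def eulerNormal (P Q R S : ℝ → ℝ) (x φ : ℝ) : Fin 3 → ℝ :=
  (![1, Q φ, S φ] : Fin 3 → ℝ) ⨯₃
    ![0, deriv P φ + deriv Q φ * x, deriv R φ + deriv S φ * x]

theorem euler_normal_constant_along_rulings
    (P Q R S : ℝ → ℝ)
    (hP : Differentiable ℝ P) (hQ : Differentiable ℝ Q)
    (hR : Differentiable ℝ R) (hS : Differentiable ℝ S)
    (hdev : ∀ φ, deriv S φ * deriv P φ = deriv Q φ * deriv R φ) :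
    ∀ x₁ x₂ φ : ℝ, eulerNormal P Q R S x₁ φ ⨯₃ eulerNormal P Q R S x₂ φ = 0 := by
  intro x₁ x₂ φ
  have h := hdev φ
  funext i
  fin_cases i <;>
    simp [eulerNormal, crossProduct] <;> ring_nf <;>
    first
      | linear_combination (x₂ - x₁) * h
      | linear_combination Q φ * (x₂ - x₁) * h
      | linear_combination S φ * (x₂ - x₁) * h
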